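/- Let A = {1,…,n}, partitioned into parts A₁,…,A_k listed in increasing order. Define the n-partite tournament B on pairs (x,χ) with x ∈ A and χ : A \ (part of x) → ℤ/2, where (x,χ) and (x',χ') in different parts are joined by an edge oriented from (x,χ) to (x',χ') iff (x > x' and χ(x') + χ'(x) = 1) or (x < x' and χ(x') + χ'(x) = 0). Then for every part-preserving bijection π of A, the map θ_π((x,χ)) = (π(x), χ^π) with χ^π(π(y)) = 1+χ(y) if x < y and π(x) > π(y), and χ^π(π(y)) = χ(y) otherwise, is an automorphism of B. -/
import Mathlib


/-- Vertices of the EPPA-witness `B` for `n`-partite tournaments: pairs `(x, χ)` with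
`x ∈ A` and `χ` a valuation function defined on the vertices outside the part of `x`. -/
abbrev NVert {A P : Type*} (part : A → P) :=
  Σ x : A, ({y : A // part y ≠ part x} → ZMod 2)

/-- The edge relation of `B`: `(x,χ)` and `(x',χ')` in different parts are joined by an
edge oriented from `(x,χ)` to `(x',χ')` iff either `x > x'` and `χ(x') + χ'(x) = 1`, or
`x < x'` and `χ(x') + χ'(x) = 0`. -/
def NEdge {A P : Type*} [LinearOrder A] (part : A → P)
    (p q : NVert part) : Prop :=
  ∃ h : part p.1 ≠ part q.1,
    (q.1 < p.1 ∧ p.2 ⟨q.1, Ne.symm h⟩ + q.2 ⟨p.1, h⟩ = 1) ∨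
    (p.1 < q.1 ∧ p.2 ⟨q.1, Ne.symm h⟩ + q.2 ⟨p.1, h⟩ = 0)

/-- The map `θ_π` for a part-preserving bijection `π`: `(x,χ) ↦ (π x, χ^π)` where
`χ^π(π y) = 1 + χ(y)` if `x < y` and `π x > π y`, and `χ^π(π y) = χ(y)` otherwise. -/
def thetaPiN {A P : Type*} [LinearOrder A] (part : A → P) (π : Equiv.Perm A)
    (hπ : ∀ x y, part (π x) = part (π y) ↔ part x = part y)
    (p : NVert part) : NVert part :=
  ⟨π p.1, fun y =>
    (if p.1 < π.symm y.1 ∧ y.1 < π p.1 then 1 else 0) +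
      p.2 ⟨π.symm y.1, fun h => y.2 (by
        have := (hπ (π.symm y.1) p.1).mpr h
        rwa [Equiv.apply_symm_apply] at this)⟩⟩

theorem stmt15 {A P : Type*} [LinearOrder A] [Fintype A] (part : A → P)
    (π : Equiv.Perm A) (hπ : ∀ x y, part (π x) = part (π y) ↔ part x = part y) :
    Function.Bijective (thetaPiN part π hπ) ∧
      ∀ p q : NVert part,
        NEdge part (thetaPiN part π hπ p) (thetaPiN part π hπ q) ↔ NEdge part p q := by

  constructor
  · rw [← Finite.injective_iff_bijective]
    rintro ⟨x, χ⟩ ⟨x', χ'⟩ h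
    obtain ⟨h1, h2⟩ := Sigma.ext_iff.mp h
    simp only [thetaPiN] at h1 h2
    have hx : x = x' := π.injective h1
    subst hx
    have h2 := eq_of_heq h2
    refine Sigma.ext rfl (heq_of_eq ?_)
    funext z
    obtain ⟨z, hz⟩ := z
    have hz' : part (π z) ≠ part (π x) := fun e => hz ((hπ z x).mp e)
    have := congrFun h2 ⟨π z, hz'⟩
    simp only [Equiv.symm_apply_apply] at this
    exact add_left_cancel this
  · rintro ⟨x, χ⟩ ⟨x', χ'⟩
    simp only [NEdge, thetaPiN, Equiv.symm_apply_apply]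
    have hpart : part (π x) ≠ part (π x') ↔ part x ≠ part x' :=
      not_iff_not.mpr (hπ x x')
    constructor
    · rintro ⟨h, hor⟩
      have h' := hpart.mp h
      refine ⟨h', ?_⟩
      rcases lt_trichotomy x x' with hlt | heq | hlt
      · rcases lt_trichotomy (π x) (π x') with hplt | hpeq | hplt
        · right
          refine ⟨hlt, ?_⟩
          rcases hor with ⟨h2, _⟩ | ⟨_, h3⟩
          · exact absurd h2 (not_lt.mpr hplt.le)
          · simpa [hlt, hplt, not_lt.mpr hplt.le, not_lt.mpr hlt.le] using h3
        · exact absurd (π.injective hpeq) (fun e => h' (e ▸ rfl))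
        · right
          refine ⟨hlt, ?_⟩
          rcases hor with ⟨_, h3⟩ | ⟨h2, _⟩
          · have := h3
            simp only [hlt, hplt, not_lt.mpr hlt.le, not_lt.mpr hplt.le, true_and,
              and_true, and_false, false_and, if_true, if_false] at this
            rw [add_assoc, zero_add] at this
            generalize χ ⟨x', _⟩ + χ' ⟨x, _⟩ = c at this ⊢
            revert this; revert c; decide
          · exact absurd h2 (not_lt.mpr hplt.le)
      · exact absurd (heq ▸ rfl) h'
      · rcases lt_trichotomy (π x) (π x') with hplt | hpeq | hplt
        · left
          refine ⟨hlt, ?_⟩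
          rcases hor with ⟨h2, _⟩ | ⟨_, h3⟩
          · exact absurd h2 (not_lt.mpr hplt.le)
          · have := h3
            simp only [hlt, hplt, not_lt.mpr hlt.le, not_lt.mpr hplt.le, true_and,
              and_true, and_false, false_and, if_true, if_false] at this
            rw [zero_add, ← add_assoc, add_comm (χ _) 1, add_assoc] at this
            generalize χ ⟨x', _⟩ + χ' ⟨x, _⟩ = c at this ⊢
            revert this; revert c; decide
        · exact absurd (π.injective hpeq) (fun e => h' (e ▸ rfl))
        · left
          refine ⟨hlt, ?_⟩
          rcases hor with ⟨_, h3⟩ | ⟨h2, _⟩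
          · simpa [hlt, hplt, not_lt.mpr hlt.le, not_lt.mpr hplt.le] using h3
          · exact absurd h2 (not_lt.mpr hplt.le)
    · rintro ⟨h, hor⟩
      have h' := hpart.mpr h
      refine ⟨h', ?_⟩
      rcases hor with ⟨hlt, hs⟩ | ⟨hlt, hs⟩
      · -- x' < x
        rcases lt_trichotomy (π x) (π x') with hplt | hpeq | hplt
        · right
          refine ⟨hplt, ?_⟩
          simp only [hlt, hplt, not_lt.mpr hlt.le, not_lt.mpr hplt.le, true_and,
            and_true, and_false, false_and, if_true, if_false]
          rw [zero_add, ← add_assoc, add_comm (χ _) 1, add_assoc]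
          generalize hc : χ ⟨x', _⟩ + χ' ⟨x, _⟩ = c
          rw [hc] at hs
          clear hc
          revert hs; revert c; decide
        · exact absurd (π.injective hpeq) (fun e => h (e ▸ rfl))
        · left
          refine ⟨hplt, ?_⟩
          simp only [hlt, hplt, not_lt.mpr hlt.le, not_lt.mpr hplt.le, true_and,
            and_true, and_false, false_and, if_true, if_false]
          rw [zero_add, zero_add]
          exact hs
      · -- x < x'
        rcases lt_trichotomy (π x) (π x') with hplt | hpeq | hplt
        · right
          refine ⟨hplt, ?_⟩
          simp only [hlt, hplt, not_lt.mpr hlt.le, not_lt.mpr hplt.le, true_and,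
            and_true, and_false, false_and, if_true, if_false]
          rw [zero_add, zero_add]
          exact hs
        · exact absurd (π.injective hpeq) (fun e => h (e ▸ rfl))
        · left
          refine ⟨hplt, ?_⟩
          simp only [hlt, hplt, not_lt.mpr hlt.le, not_lt.mpr hplt.le, true_and,
            and_true, and_false, false_and, if_true, if_false]
          rw [add_assoc, zero_add]
          generalize hc : χ ⟨x', _⟩ + χ' ⟨x, _⟩ = c
          rw [hc] at hs
          clear hc
          revert hs; revert c; decide
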